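/- Let S be a segment crossing a rectangle R₁ vertically, and let R₂ be a rectangle crossed horizontally by R₁ (i.e. the top and bottom sides of R₂ cross R₁). Then S intersects R₂. -/

import Mathlib

open Set

/-- Sides of the rectangle `[a,c] × [b,d]`. -/
def topSide (a c b d : ℝ) : Set (ℝ × ℝ) := Icc a c ×ˢ {d}
def botSide (a c b d : ℝ) : Set (ℝ × ℝ) := Icc a c ×ˢ {b}
def leftSide (a c b d : ℝ) : Set (ℝ × ℝ) := {a} ×ˢ Icc b d
def rightSide (a c b d : ℝ) : Set (ℝ × ℝ) := {c} ×ˢ Icc b d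

/-- A set crosses the rectangle `[a,c] × [b,d]` vertically if it meets both
horizontal sides. -/
def CrossesVertically (S : Set (ℝ × ℝ)) (a c b d : ℝ) : Prop :=
  (S ∩ topSide a c b d).Nonempty ∧ (S ∩ botSide a c b d).Nonempty

/-- A set crosses the rectangle `[a,c] × [b,d]` horizontally if it meets both
vertical sides. -/
def CrossesHorizontally (S : Set (ℝ × ℝ)) (a c b d : ℝ) : Prop :=
  (S ∩ leftSide a c b d).Nonempty ∧ (S ∩ rightSide a c b d).Nonempty

/-- a segment `S` crossing a rectangle `R₁` vertically intersects
every rectangle `R₂` that crosses `R₁` horizontally (i.e. whose top and bottom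
sides cross `R₁` horizontally). -/
theorem segment_meets_crossing_rectangle
    (P Q : ℝ × ℝ) (a₁ c₁ b₁ d₁ a₂ c₂ b₂ d₂ : ℝ)
    (hR₁ : a₁ < c₁ ∧ b₁ < d₁) (hR₂ : a₂ < c₂ ∧ b₂ < d₂)
    (hS : CrossesVertically (segment ℝ P Q) a₁ c₁ b₁ d₁)
    (htop : CrossesHorizontally (topSide a₂ c₂ b₂ d₂) a₁ c₁ b₁ d₁)
    (hbot : CrossesHorizontally (botSide a₂ c₂ b₂ d₂) a₁ c₁ b₁ d₁) :
    (segment ℝ P Q ∩ Icc a₂ c₂ ×ˢ Icc b₂ d₂).Nonempty := by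

  obtain ⟨hac₁, hbd₁⟩ := hR₁
  obtain ⟨hac₂, hbd₂⟩ := hR₂
  obtain ⟨⟨T, hT, hTx, hTy⟩, ⟨B, hB, hBx, hBy⟩⟩ := hS
  obtain ⟨⟨pl, ⟨plx, ply⟩, plx', ply'⟩, _⟩ := htop
  obtain ⟨_, ⟨pr, ⟨prx, pry⟩, prx', pry'⟩⟩ := hbot
  simp only [topSide, botSide, leftSide, rightSide, mem_prod, mem_singleton_iff,
    mem_Icc] at *
  -- key facts
  have ha₁ : a₂ ≤ a₁ ∧ a₁ ≤ c₂ := by rw [plx'] at plx; exact plx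
  have hc₁ : a₂ ≤ c₁ ∧ c₁ ≤ c₂ := by rw [prx'] at prx; exact prx
  have hd₂ : b₁ ≤ d₂ ∧ d₂ ≤ d₁ := by rw [← ply]; exact ply'
  have hb₂ : b₁ ≤ b₂ ∧ b₂ ≤ d₁ := by rw [← pry]; exact pry'
  set t : ℝ := (d₂ - b₁) / (d₁ - b₁) with ht
  have hden : (0:ℝ) < d₁ - b₁ := by linarith
  have ht0 : 0 ≤ t := div_nonneg (by linarith [hd₂.1]) hden.le
  have ht1 : t ≤ 1 := by
    rw [div_le_one hden]; linarith [hd₂.2]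
  refine ⟨(1 - t) • B + t • T, ?_, ?_, ?_⟩
  · have : segment ℝ B T ⊆ segment ℝ P Q :=
      (convex_segment P Q).segment_subset hB hT
    exact this ⟨1 - t, t, by linarith, ht0, by ring, rfl⟩
  · have hx : ((1 - t) • B + t • T).1 = (1 - t) * B.1 + t * T.1 := rfl
    rw [hx]
    constructor
    · nlinarith [hBx.1, hTx.1, ha₁.1]
    · nlinarith [hBx.2, hTx.2, hc₁.2]
  · have hy : ((1 - t) • B + t • T).2 = (1 - t) * B.2 + t * T.2 := rfl
    rw [hy, hBy, hTy]
    have : (1 - t) * b₁ + t * d₁ = d₂ := by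
      rw [ht]; linear_combination (div_mul_cancel₀ (d₂ - b₁) hden.ne' : (d₂ - b₁) / (d₁ - b₁) * (d₁ - b₁) = d₂ - b₁)
    rw [this]
    exact ⟨by linarith [hb₂.1, hd₂.1, hbd₂.le], le_refl _⟩
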